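/- Let (X_n)_{n≥0} be a positive recurrent homogeneous Markov chain with countable state space S and stationary distribution π. Let τ be a stopping time that is finite almost surely and satisfies X_τ = x almost surely, with X_0 = x. Then for all y ∈ S, E[ ∑_{t=0}^{τ−1} 1{X_t = y} | X_0 = x ] = E[τ | X_0 = x] · π_y. -/

import Mathlib

open MeasureTheory

section Aux

open Finset

lemma auxPowNonneg {S : Type*} [Fintype S] [DecidableEq S] (P : Matrix S S ℝ)
    (hP0 : ∀ a b, 0 ≤ P a b) : ∀ (n : ℕ) (a b : S), 0 ≤ (P ^ n) a b := by
  intro n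
  induction n with
  | zero => intro a b; rw [pow_zero]; by_cases h : a = b <;> simp [Matrix.one_apply, h]
  | succ n ih =>
    intro a b
    rw [pow_succ, Matrix.mul_apply]
    exact Finset.sum_nonneg fun c _ => mul_nonneg (ih a c) (hP0 c b)

lemma statSub {S : Type*} [Fintype S] [DecidableEq S] (P : Matrix S S ℝ)
    (hP0 : ∀ a b, 0 ≤ P a b) (hProw : ∀ a, ∑ b, P a b = 1)
    (hrec : ∀ a b : S, ∃ n : ℕ, 0 < n ∧ 0 < (P ^ n) a b)
    (g : S → ℝ) (hg : ∀ b, ∑ a, g a * P a b = g b) (hsum : ∑ a, g a = 0) :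
    ∀ y, g y = 0 := by
  have hPn0 := auxPowNonneg P hP0
  set u : S → ℝ := fun y => max (g y) 0 with hu
  have hu0 : ∀ y, 0 ≤ u y := fun y => le_max_right _ _
  have hle : ∀ y, u y ≤ ∑ a, u a * P a y := by
    intro y
    have h1 : g y ≤ ∑ a, u a * P a y := by
      rw [← hg y]
      exact Finset.sum_le_sum fun a _ => mul_le_mul_of_nonneg_right (le_max_left _ _) (hP0 a y)
    have h2 : (0:ℝ) ≤ ∑ a, u a * P a y :=
      Finset.sum_nonneg fun a _ => mul_nonneg (hu0 a) (hP0 a y)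
    exact max_le h1 h2
  have hsums : ∑ y, (∑ a, u a * P a y) = ∑ y, u y := by
    rw [Finset.sum_comm]
    simp_rw [← Finset.mul_sum, hProw, mul_one]
  have heq : ∀ y, ∑ a, u a * P a y = u y := by
    intro y
    exact ((Finset.sum_eq_sum_iff_of_le (fun i _ => hle i)).mp hsums.symm y (mem_univ y)).symm
  have hpow : ∀ n, ∀ y, ∑ a, u a * (P ^ n) a y = u y := by
    intro n
    induction n with
    | zero => intro y; simp [Matrix.one_apply]
    | succ n ih =>
      intro y
      have : ∀ a, (P ^ (n+1)) a y = ∑ c, (P ^ n) a c * P c y := by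
        intro a; rw [pow_succ, Matrix.mul_apply]
      simp_rw [this, Finset.mul_sum, ← mul_assoc]
      rw [Finset.sum_comm]
      simp_rw [← Finset.sum_mul, ih, heq]
  have key : ∀ y, g y ≤ 0 := by
    by_contra hcon
    push_neg at hcon
    obtain ⟨a, ha⟩ := hcon
    have hc : ∃ c, g c < 0 := by
      by_contra hc
      push_neg at hc
      have hgt : (0:ℝ) < ∑ b, g b :=
        lt_of_lt_of_le ha (Finset.single_le_sum (fun b _ => hc b) (mem_univ a))
      linarith [hsum]
    obtain ⟨c, hcneg⟩ := hc
    obtain ⟨n, -, hn⟩ := hrec a c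
    have hpos : 0 < u c := by
      rw [← hpow n c]
      have h1 : u a * (P ^ n) a c ≤ ∑ b, u b * (P ^ n) b c :=
        Finset.single_le_sum (fun b _ => mul_nonneg (hu0 b) (hPn0 n b c)) (mem_univ a)
      have h2 : 0 < u a * (P ^ n) a c :=
        mul_pos (lt_max_iff.mpr (Or.inl ha)) hn
      linarith
    have hz : u c = 0 := by simp [hu, max_eq_right hcneg.le]
    linarith
  intro y
  by_contra hy
  have hlt : g y < 0 := lt_of_le_of_ne (key y) hy
  have : ∑ b, g b < ∑ b, (0:ℝ) :=
    Finset.sum_lt_sum (fun b _ => key b) ⟨y, mem_univ y, hlt⟩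
  simp at this
  linarith

lemma statUnique {S : Type*} [Fintype S] [DecidableEq S] (P : Matrix S S ℝ)
    (hP0 : ∀ a b, 0 ≤ P a b) (hProw : ∀ a, ∑ b, P a b = 1)
    (hrec : ∀ a b : S, ∃ n : ℕ, 0 < n ∧ 0 < (P ^ n) a b)
    (π : S → ℝ) (hπsum : ∑ a, π a = 1) (hstat : ∀ b, ∑ a, π a * P a b = π b)
    (f : S → ℝ) (hfstat : ∀ b, ∑ a, f a * P a b = f b) :
    ∀ y, f y = (∑ a, f a) * π y := by
  set c := ∑ a, f a with hc
  set g : S → ℝ := fun y => f y - c * π y with hgdef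
  have hg : ∀ b, ∑ a, g a * P a b = g b := by
    intro b
    simp only [hgdef, sub_mul, Finset.sum_sub_distrib, hfstat b, mul_assoc, ← Finset.mul_sum,
      hstat b]
  have hsum : ∑ a, g a = 0 := by
    simp only [hgdef, Finset.sum_sub_distrib, ← Finset.mul_sum, hπsum, mul_one, ← hc, sub_self]
  intro y
  have := statSub P hP0 hProw hrec g hg hsum y
  simp only [hgdef] at this
  linarith

lemma aeEqMeas {Ω : Type*} [MeasurableSpace Ω] (μ : Measure Ω) [IsProbabilityMeasure μ]
    (E : Set Ω) (hE : μ E + μ Eᶜ ≤ 1) :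
    ∃ B, MeasurableSet B ∧ μ B = μ E ∧ ∀ᵐ ω ∂μ, (ω ∈ E ↔ ω ∈ B) := by
  set C := toMeasurable μ E with hC
  set C' := toMeasurable μ Eᶜ with hC'
  have hCm : MeasurableSet C := measurableSet_toMeasurable μ E
  have hC'm : MeasurableSet C' := measurableSet_toMeasurable μ Eᶜ
  have hmeq : μ C = μ E := measure_toMeasurable E
  have hmeq' : μ C' = μ Eᶜ := measure_toMeasurable Eᶜ
  have huniv : μ (C ∪ C') = 1 := by
    have h1 : Set.univ ⊆ C ∪ C' := by
      intro ω _
      by_cases h : ω ∈ E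
      · exact Or.inl (subset_toMeasurable μ E h)
      · exact Or.inr (subset_toMeasurable μ Eᶜ h)
    have h2 := measure_mono (μ := μ) h1
    rw [measure_univ] at h2
    exact le_antisymm prob_le_one h2
  have hinter : μ (C ∩ C') = 0 := by
    have hsum := measure_union_add_inter (μ := μ) C hC'm
    rw [huniv, hmeq, hmeq'] at hsum
    have : 1 + μ (C ∩ C') ≤ 1 + 0 := by
      rw [add_zero, hsum]; exact hE
    exact le_antisymm ((ENNReal.add_le_add_iff_left ENNReal.one_ne_top).mp this) (zero_le)
  refine ⟨C, hCm, hmeq, ?_⟩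
  have hae : ∀ᵐ ω ∂μ, ω ∉ C ∩ C' := measure_eq_zero_iff_ae_notMem.mp hinter
  filter_upwards [hae] with ω hω
  constructor
  · intro h; exact subset_toMeasurable μ E h
  · intro h
    by_contra hnE
    exact hω ⟨h, subset_toMeasurable μ Eᶜ hnE⟩

end Aux

/-- `X` is a time-homogeneous Markov chain (indexed from time `0`) with one-step
transition matrix `P`. -/
def IsMarkovChainFrom0 {Ω S : Type*} [Fintype S] [MeasurableSpace Ω]
    (μ : Measure Ω) (X : ℕ → Ω → S) (P : Matrix S S ℝ) : Prop :=
  ∀ (t : ℕ) (s : Fin (t + 1) → S) (y : S),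
    μ {ω | ∀ i : Fin (t + 1), X i ω = s i} ≠ 0 →
    (μ {ω | X (t + 1) ω = y ∧ ∀ i : Fin (t + 1), X i ω = s i}).toReal
      = P (s (Fin.last t)) y * (μ {ω | ∀ i : Fin (t + 1), X i ω = s i}).toReal

theorem stmt_5 {Ω S : Type*} [Fintype S] [DecidableEq S] [Nonempty S] [MeasurableSpace Ω]
    (μ : Measure Ω) [IsProbabilityMeasure μ]
    (X : ℕ → Ω → S) (P : Matrix S S ℝ) (π : S → ℝ) (x : S)
    (hchain : IsMarkovChainFrom0 μ X P)
    (hP0 : ∀ a b, 0 ≤ P a b) (hProw : ∀ a, ∑ b, P a b = 1)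
    (hrec : ∀ a b : S, ∃ n : ℕ, 0 < n ∧ 0 < (P ^ n) a b)  -- positive recurrence (finite irreducible chain)
    (hπpos : ∀ a, 0 < π a) (hπsum : ∑ a, π a = 1)
    (hstat : ∀ b, ∑ a, π a * P a b = π b)
    (τ : Ω → ℕ)
    (hτstop : ∀ n : ℕ, MeasurableSet[MeasurableSpace.comap
        (fun ω => fun i : Fin (n + 1) => X i ω) ⊤] {ω | τ ω ≤ n})
    (hstart : ∀ᵐ ω ∂μ, X 0 ω = x)
    (hend : ∀ᵐ ω ∂μ, X (τ ω) ω = x) :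
    ∀ y : S,
      (∫⁻ ω, (∑ t ∈ Finset.range (τ ω), if X t ω = y then (1 : ENNReal) else 0) ∂μ)
        = (∫⁻ ω, (τ ω : ENNReal) ∂μ) * ENNReal.ofReal (π y) := by
  classical
  -- path weights
  set w : (t : ℕ) → (Fin (t+1) → S) → ℝ :=
    fun t s => if s 0 = x then ∏ i : Fin t, P (s i.castSucc) (s i.succ) else 0 with hwdef
  have hw0 : ∀ t s, 0 ≤ w t s := by
    intro t s
    simp only [hwdef]
    split
    · exact Finset.prod_nonneg fun i _ => hP0 _ _
    · exact le_refl 0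
  have hwsnoc : ∀ (t : ℕ) (s : Fin (t+2) → S),
      w (t+1) s = w t (s ∘ Fin.castSucc) * P (s (Fin.last t).castSucc) (s (Fin.last (t+1))) := by
    intro t s
    simp only [hwdef, Function.comp]
    have h0 : s (Fin.castSucc 0) = s 0 := by norm_num
    rw [Fin.prod_univ_castSucc]
    by_cases hx : s 0 = x
    · rw [if_pos hx, if_pos (by rwa [h0])]
      simp [Fin.succ_last]
    · rw [if_neg hx, if_neg (by rwa [h0]), zero_mul]
  -- cylinder measure formula
  have hcyl : ∀ (t : ℕ) (s : Fin (t+1) → S),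
      μ {ω | ∀ i : Fin (t + 1), X i ω = s i} = ENNReal.ofReal (w t s) := by
    intro t
    induction t with
    | zero =>
      intro s
      have hset : {ω | ∀ i : Fin 1, X i ω = s i} = {ω | X 0 ω = s 0} := by
        ext ω
        constructor
        · intro h; exact h 0
        · intro h i
          have : i = 0 := Subsingleton.elim i 0
          rw [this]; exact h
      rw [hset]
      by_cases hx : s 0 = x
      · subst hx
        have hcnull : μ {ω | X 0 ω = s 0}ᶜ = 0 := by
          apply measure_mono_null _ (ae_iff.mp hstart)
          intro ω h
          exact h
        have h1 : μ {ω | X 0 ω = s 0} = 1 := by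
          have hle : μ Set.univ ≤ μ {ω | X 0 ω = s 0} + μ {ω | X 0 ω = s 0}ᶜ := by
            rw [← Set.union_compl_self {ω | X 0 ω = s 0}]
            exact measure_union_le _ _
          rw [hcnull, add_zero, measure_univ] at hle
          exact le_antisymm prob_le_one hle
        rw [h1]
        simp [hwdef]
      · have hnull : μ {ω | X 0 ω = s 0} = 0 := by
          apply measure_mono_null (fun ω h => ?_)
            (by exact ae_iff.mp hstart : μ {ω | ¬ X 0 ω = x} = 0)
          simp only [Set.mem_setOf_eq] at *
          rw [h]; exact hx
        rw [hnull]
        simp [hwdef, hx]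
    | succ t ih =>
      intro s
      set s' := s ∘ Fin.castSucc with hs'
      have hset : {ω | ∀ i : Fin (t+2), X i ω = s i}
          = {ω | X (t + 1) ω = s (Fin.last (t+1)) ∧ ∀ i : Fin (t + 1), X i ω = s' i} := by
        ext ω
        simp only [Set.mem_setOf_eq]
        constructor
        · intro h
          refine ⟨?_, fun i => ?_⟩
          · have := h (Fin.last (t+1)); simpa using this
          · have := h i.castSucc; simpa [hs'] using this
        · rintro ⟨h1, h2⟩ i
          rcases Fin.eq_castSucc_or_eq_last i with ⟨j, rfl⟩ | rfl
          · have := h2 j; simpa [hs'] using this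
          · simpa using h1
      rw [hset, hwsnoc t s]
      have hlast : s' (Fin.last t) = s (Fin.last t).castSucc := rfl
      by_cases h0 : μ {ω | ∀ i : Fin (t + 1), X i ω = s' i} = 0
      · have hw' : w t s' = 0 := by
          have h1 := ih s'
          rw [h0] at h1
          have h2 := hw0 t s'
          have h3 := ENNReal.ofReal_eq_zero.mp h1.symm
          linarith
        rw [hw', zero_mul, ENNReal.ofReal_zero]
        apply measure_mono_null _ h0
        intro ω h; exact h.2
      · have hmc := hchain t s' (s (Fin.last (t+1))) h0
        have hfin : μ {ω | X (t + 1) ω = s (Fin.last (t+1)) ∧ ∀ i : Fin (t + 1), X i ω = s' i}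
            ≠ ⊤ := measure_ne_top μ _
        rw [← ENNReal.ofReal_toReal hfin, hmc, ih s', ENNReal.toReal_ofReal (hw0 t s'), hlast,
          mul_comm]
  -- snoc form of w
  have hwsnoc' : ∀ (t : ℕ) (s' : Fin (t+1) → S) (y : S),
      w (t+1) (Fin.snoc s' y) = w t s' * P (s' (Fin.last t)) y := by
    intro t s' y
    rw [hwsnoc t (Fin.snoc s' y)]
    congr 1
    · congr 1
      funext i
      simp [Fin.snoc_castSucc]
    · rw [Fin.snoc_castSucc, Fin.snoc_last]
  -- total mass one
  have hmass : ∀ t : ℕ, ∑ s : Fin (t+1) → S, w t s = 1 := by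
    intro t
    induction t with
    | zero =>
      have h : ∀ s : Fin 1 → S, w 0 s = if (Equiv.funUnique (Fin 1) S) s = x then 1 else 0 := by
        intro s
        simp [hwdef, Equiv.funUnique]
      rw [Fintype.sum_equiv (Equiv.funUnique (Fin 1) S) (w 0)
        (fun a => if a = x then (1:ℝ) else 0) h]
      simp
    | succ t ih =>
      rw [← Fintype.sum_equiv (Fin.snocEquiv (fun _ => S)) _ (w (t+1)) (fun p => rfl)]
      rw [Fintype.sum_prod_type]
      have h : ∀ (y : S) (s' : Fin (t+1) → S),
          w (t+1) (Fin.snocEquiv (fun _ => S) (y, s')) = w t s' * P (s' (Fin.last t)) y := by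
        intro y s'
        have hh : (Fin.snocEquiv (fun _ => S)) (y, s') = Fin.snoc s' y := rfl
        rw [hh, hwsnoc']
      simp_rw [h]
      rw [Finset.sum_comm]
      simp_rw [← Finset.mul_sum, hProw, mul_one, ih]
  -- preimage measure formula
  have hpre : ∀ (t : ℕ) (A : Finset (Fin (t+1) → S)),
      μ {ω | (fun i : Fin (t+1) => X i ω) ∈ A} = ENNReal.ofReal (∑ s ∈ A, w t s) := by
    intro t A
    have hub : ∀ B : Finset (Fin (t+1) → S),
        μ {ω | (fun i : Fin (t+1) => X i ω) ∈ B} ≤ ENNReal.ofReal (∑ s ∈ B, w t s) := by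
      intro B
      have hunion : {ω | (fun i : Fin (t+1) => X i ω) ∈ B}
          = ⋃ s ∈ B, {ω | ∀ i : Fin (t+1), X i ω = s i} := by
        ext ω
        simp only [Set.mem_setOf_eq, Set.mem_iUnion]
        constructor
        · intro h
          exact ⟨_, h, fun i => rfl⟩
        · rintro ⟨s, hs, h⟩
          have : (fun i : Fin (t+1) => X i ω) = s := funext h
          rwa [this]
      rw [hunion, ENNReal.ofReal_sum_of_nonneg (fun s _ => hw0 t s)]
      refine le_trans (measure_biUnion_finset_le B _) ?_
      exact Finset.sum_le_sum fun s _ => le_of_eq (hcyl t s)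
    have htot : (∑ s ∈ A, w t s) + (∑ s ∈ Aᶜ, w t s) = 1 := by
      rw [Finset.sum_add_sum_compl]; exact hmass t
    have hge : ENNReal.ofReal (∑ s ∈ A, w t s) + ENNReal.ofReal (∑ s ∈ Aᶜ, w t s)
        ≤ μ {ω | (fun i : Fin (t+1) => X i ω) ∈ A} + ENNReal.ofReal (∑ s ∈ Aᶜ, w t s) := by
      have h1 : ENNReal.ofReal (∑ s ∈ A, w t s) + ENNReal.ofReal (∑ s ∈ Aᶜ, w t s) = 1 := by
        rw [← ENNReal.ofReal_add (Finset.sum_nonneg fun s _ => hw0 t s)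
          (Finset.sum_nonneg fun s _ => hw0 t s), htot, ENNReal.ofReal_one]
      rw [h1]
      have h2 : (1:ENNReal) = μ Set.univ := measure_univ.symm
      rw [h2]
      have h3 : (Set.univ : Set Ω) ⊆ {ω | (fun i : Fin (t+1) => X i ω) ∈ A}
          ∪ {ω | (fun i : Fin (t+1) => X i ω) ∈ Aᶜ} := by
        intro ω _
        by_cases h : (fun i : Fin (t+1) => X i ω) ∈ A
        · exact Or.inl h
        · exact Or.inr (by simpa using h)
      refine le_trans (measure_mono h3) ?_
      refine le_trans (measure_union_le _ _) ?_
      exact add_le_add le_rfl (hub Aᶜ)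
    exact le_antisymm (hub A) ((ENNReal.add_le_add_iff_right ENNReal.ofReal_ne_top).mp hge)
  -- predicate version
  have hpreP : ∀ (t : ℕ) (p : (Fin (t+1) → S) → Prop),
      μ {ω | p (fun i : Fin (t+1) => X i ω)}
        = ENNReal.ofReal (∑ s, Set.indicator {s | p s} (w t) s) := by
    intro t p
    have h1 : {ω | p (fun i : Fin (t+1) => X i ω)}
        = {ω | (fun i : Fin (t+1) => X i ω) ∈ Finset.univ.filter p} := by
      ext ω; simp
    rw [h1, hpre]
    congr 1
    rw [Finset.sum_filter]
    apply Finset.sum_congr rfl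
    intro s _
    by_cases h : p s <;> simp [Set.indicator_apply, h]
  -- ae-measurable versions of preimage events
  have haemeas : ∀ (t : ℕ) (p : (Fin (t+1) → S) → Prop),
      ∃ B, MeasurableSet B ∧ μ B = μ {ω | p (fun i : Fin (t+1) => X i ω)}
        ∧ ∀ᵐ ω ∂μ, (p (fun i : Fin (t+1) => X i ω) ↔ ω ∈ B) := by
    intro t p
    have hc : {ω | p (fun i : Fin (t+1) => X i ω)}ᶜ
        = {ω | ¬ p (fun i : Fin (t+1) => X i ω)} := by
      ext ω; simp
    have hE : μ {ω | p (fun i : Fin (t+1) => X i ω)}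
        + μ {ω | p (fun i : Fin (t+1) => X i ω)}ᶜ ≤ 1 := by
      rw [hc, hpreP t p, hpreP t (fun s => ¬ p s), ← ENNReal.ofReal_add
        (Finset.sum_nonneg fun s _ => Set.indicator_nonneg (fun a _ => hw0 t a) s)
        (Finset.sum_nonneg fun s _ => Set.indicator_nonneg (fun a _ => hw0 t a) s)]
      apply ENNReal.ofReal_le_one.mpr
      rw [← Finset.sum_add_distrib, ← hmass t]
      apply Finset.sum_le_sum
      intro s _
      by_cases h : p s <;> simp [Set.indicator_apply, h, hw0 t s]
    exact aeEqMeas μ _ hE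
  -- stopping-time sets
  have hstopA : ∀ t : ℕ, ∃ A : Set (Fin (t+1) → S),
      (fun ω => fun i : Fin (t+1) => X i ω) ⁻¹' A = {ω | τ ω ≤ t} := by
    intro t
    obtain ⟨A, -, hA⟩ := hτstop t
    exact ⟨A, hA⟩
  choose A hA using hstopA
  have hAmem : ∀ (t : ℕ) (ω : Ω), ((fun i : Fin (t+1) => X i ω) ∈ A t) ↔ τ ω ≤ t := by
    intro t ω
    constructor
    · intro h
      have : ω ∈ (fun ω => fun i : Fin (t+1) => X i ω) ⁻¹' A t := h
      rw [hA t] at this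
      exact this
    · intro h
      have : ω ∈ {ω | τ ω ≤ t} := h
      rw [← hA t] at this
      exact this
  -- occupation events
  set Et : ℕ → S → Set Ω := fun t y => {ω | t < τ ω ∧ X t ω = y} with hEtdef
  set Et' : ℕ → S → Set Ω := fun t y => {ω | t < τ ω ∧ X (t+1) ω = y} with hEt'def
  have hEtp : ∀ t y, Et t y
      = {ω | (fun s : Fin (t+1) → S => ¬ s ∈ A t ∧ s (Fin.last t) = y)
          (fun i : Fin (t+1) => X i ω)} := by
    intro t y
    ext ω
    simp only [hEtdef, Set.mem_setOf_eq, Fin.val_last]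
    constructor
    · rintro ⟨h1, h2⟩
      exact ⟨fun hm => absurd ((hAmem t ω).mp hm) (not_le.mpr h1), h2⟩
    · rintro ⟨h1, h2⟩
      exact ⟨not_le.mp (fun hle => h1 ((hAmem t ω).mpr hle)), h2⟩
  have hEt'p : ∀ t y, Et' t y
      = {ω | (fun s : Fin (t+2) → S => ¬ (s ∘ Fin.castSucc) ∈ A t ∧ s (Fin.last (t+1)) = y)
          (fun i : Fin (t+2) => X i ω)} := by
    intro t y
    ext ω
    have hcomp : ((fun i : Fin (t+2) => X i ω) ∘ Fin.castSucc) = (fun i : Fin (t+1) => X i ω) := by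
      funext i
      simp
    simp only [hEt'def, Set.mem_setOf_eq, Fin.val_last, hcomp]
    constructor
    · rintro ⟨h1, h2⟩
      exact ⟨fun hm => absurd ((hAmem t ω).mp hm) (not_le.mpr h1), h2⟩
    · rintro ⟨h1, h2⟩
      exact ⟨not_le.mp (fun hle => h1 ((hAmem t ω).mpr hle)), h2⟩
  -- measurable versions
  have hBex : ∀ (t : ℕ) (y : S), ∃ B, MeasurableSet B ∧ μ B = μ (Et t y)
      ∧ ∀ᵐ ω ∂μ, (ω ∈ Et t y ↔ ω ∈ B) := by
    intro t y
    obtain ⟨B, h1, h2, h3⟩ := haemeas t (fun s => ¬ s ∈ A t ∧ s (Fin.last t) = y)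
    refine ⟨B, h1, by rw [hEtp t y]; exact h2, ?_⟩
    filter_upwards [h3] with ω h
    rw [hEtp t y]
    exact h
  choose B hB1 hB2 hB3 using hBex
  have hB'ex : ∀ (t : ℕ) (y : S), ∃ B, MeasurableSet B ∧ μ B = μ (Et' t y)
      ∧ ∀ᵐ ω ∂μ, (ω ∈ Et' t y ↔ ω ∈ B) := by
    intro t y
    obtain ⟨B, h1, h2, h3⟩ := haemeas (t+1)
      (fun s => ¬ (s ∘ Fin.castSucc) ∈ A t ∧ s (Fin.last (t+1)) = y)
    refine ⟨B, h1, by rw [hEt'p t y]; exact h2, ?_⟩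
    filter_upwards [h3] with ω h
    rw [hEt'p t y]
    exact h
  choose B' hB'1 hB'2 hB'3 using hB'ex
  have hEtm : ∀ (t : ℕ) (y : S), μ (Et t y)
      = ENNReal.ofReal (∑ s' : Fin (t+1) → S,
          Set.indicator {s' : Fin (t+1) → S | ¬ s' ∈ A t ∧ s' (Fin.last t) = y} (w t) s') := by
    intro t y
    rw [hEtp t y]
    exact hpreP t (fun s' => ¬ s' ∈ A t ∧ s' (Fin.last t) = y)
  have hEt'm : ∀ (t : ℕ) (y : S), μ (Et' t y)
      = ENNReal.ofReal (∑ s : Fin (t+2) → S,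
          Set.indicator {s : Fin (t+2) → S |
            ¬ (s ∘ Fin.castSucc) ∈ A t ∧ s (Fin.last (t+1)) = y} (w (t+1)) s) := by
    intro t y
    rw [hEt'p t y]
    exact hpreP (t+1) (fun s => ¬ (s ∘ Fin.castSucc) ∈ A t ∧ s (Fin.last (t+1)) = y)
  -- lintegral of tsum of indicators
  have hGint : ∀ (C : ℕ → Set Ω), (∀ t, MeasurableSet (C t)) →
      (∫⁻ ω, ∑' t, (C t).indicator (fun _ => (1:ENNReal)) ω ∂μ) = ∑' t, μ (C t) := by
    intro C hC
    rw [lintegral_tsum (f := fun t => (C t).indicator (fun _ => (1:ENNReal)))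
      (fun t => (measurable_one.indicator (hC t)).aemeasurable)]
    apply tsum_congr
    intro t
    rw [lintegral_indicator (hC t), setLIntegral_one]
  -- pointwise identity (unshifted)
  have hptwise : ∀ᵐ ω ∂μ, ∀ y : S,
      (∑ t ∈ Finset.range (τ ω), if X t ω = y then (1:ENNReal) else 0)
        = ∑' t, (B t y).indicator (fun _ => (1:ENNReal)) ω := by
    have hae : ∀ᵐ ω ∂μ, ∀ (t : ℕ) (y : S), (ω ∈ Et t y ↔ ω ∈ B t y) :=
      ae_all_iff.mpr (fun t => ae_all_iff.mpr (fun y => hB3 t y))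
    filter_upwards [hae] with ω hω y
    have h1 : ∑' t, (if ω ∈ Et t y then (1:ENNReal) else 0)
        = ∑ t ∈ Finset.range (τ ω), (if ω ∈ Et t y then (1:ENNReal) else 0) := by
      apply tsum_eq_sum
      intro t ht
      rw [if_neg]
      intro hc
      exact ht (Finset.mem_range.mpr hc.1)
    have h2 : ∑ t ∈ Finset.range (τ ω), (if ω ∈ Et t y then (1:ENNReal) else 0)
        = ∑ t ∈ Finset.range (τ ω), (if X t ω = y then (1:ENNReal) else 0) := by
      apply Finset.sum_congr rfl
      intro t ht
      have htlt : t < τ ω := Finset.mem_range.mp ht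
      by_cases h : X t ω = y
      · rw [if_pos h, if_pos (show ω ∈ Et t y from ⟨htlt, h⟩)]
      · rw [if_neg h, if_neg (show ω ∉ Et t y from fun hc => h hc.2)]
    rw [← h2, ← h1]
    apply tsum_congr
    intro t
    rw [Set.indicator_apply]
    by_cases h : ω ∈ Et t y
    · rw [if_pos h, if_pos ((hω t y).mp h)]
    · rw [if_neg h, if_neg (fun hb => h ((hω t y).mpr hb))]
  -- pointwise identity (shifted)
  have hptwise' : ∀ᵐ ω ∂μ, ∀ y : S,
      (∑ t ∈ Finset.range (τ ω), if X (t+1) ω = y then (1:ENNReal) else 0)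
        = ∑' t, (B' t y).indicator (fun _ => (1:ENNReal)) ω := by
    have hae : ∀ᵐ ω ∂μ, ∀ (t : ℕ) (y : S), (ω ∈ Et' t y ↔ ω ∈ B' t y) :=
      ae_all_iff.mpr (fun t => ae_all_iff.mpr (fun y => hB'3 t y))
    filter_upwards [hae] with ω hω y
    have h1 : ∑' t, (if ω ∈ Et' t y then (1:ENNReal) else 0)
        = ∑ t ∈ Finset.range (τ ω), (if ω ∈ Et' t y then (1:ENNReal) else 0) := by
      apply tsum_eq_sum
      intro t ht
      rw [if_neg]
      intro hc
      exact ht (Finset.mem_range.mpr hc.1)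
    have h2 : ∑ t ∈ Finset.range (τ ω), (if ω ∈ Et' t y then (1:ENNReal) else 0)
        = ∑ t ∈ Finset.range (τ ω), (if X (t+1) ω = y then (1:ENNReal) else 0) := by
      apply Finset.sum_congr rfl
      intro t ht
      have htlt : t < τ ω := Finset.mem_range.mp ht
      by_cases h : X (t+1) ω = y
      · rw [if_pos h, if_pos (show ω ∈ Et' t y from ⟨htlt, h⟩)]
      · rw [if_neg h, if_neg (show ω ∉ Et' t y from fun hc => h hc.2)]
    rw [← h2, ← h1]
    apply tsum_congr
    intro t
    rw [Set.indicator_apply]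
    by_cases h : ω ∈ Et' t y
    · rw [if_pos h, if_pos ((hω t y).mp h)]
    · rw [if_neg h, if_neg (fun hb => h ((hω t y).mpr hb))]
  -- LHS formula
  have hLHS : ∀ y : S,
      (∫⁻ ω, (∑ t ∈ Finset.range (τ ω), if X t ω = y then (1:ENNReal) else 0) ∂μ)
        = ∑' t, μ (Et t y) := by
    intro y
    have hfeq : (fun ω => ∑ t ∈ Finset.range (τ ω), if X t ω = y then (1:ENNReal) else 0)
        =ᵐ[μ] (fun ω => ∑' t, (B t y).indicator (fun _ => (1:ENNReal)) ω) := by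
      filter_upwards [hptwise] with ω h
      exact h y
    rw [lintegral_congr_ae hfeq, hGint (fun t => B t y) (fun t => hB1 t y)]
    exact tsum_congr (fun t => hB2 t y)
  -- shifted LHS formula
  have hLHS' : ∀ y : S,
      (∫⁻ ω, (∑ t ∈ Finset.range (τ ω), if X (t+1) ω = y then (1:ENNReal) else 0) ∂μ)
        = ∑' t, μ (Et' t y) := by
    intro y
    have hfeq : (fun ω => ∑ t ∈ Finset.range (τ ω), if X (t+1) ω = y then (1:ENNReal) else 0)
        =ᵐ[μ] (fun ω => ∑' t, (B' t y).indicator (fun _ => (1:ENNReal)) ω) := by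
      filter_upwards [hptwise'] with ω h
      exact h y
    rw [lintegral_congr_ae hfeq, hGint (fun t => B' t y) (fun t => hB'1 t y)]
    exact tsum_congr (fun t => hB'2 t y)
  -- cycle identity
  have hcycle : ∀ y : S,
      (∫⁻ ω, (∑ t ∈ Finset.range (τ ω), if X t ω = y then (1:ENNReal) else 0) ∂μ)
        = (∫⁻ ω, (∑ t ∈ Finset.range (τ ω), if X (t+1) ω = y then (1:ENNReal) else 0) ∂μ) := by
    intro y
    apply lintegral_congr_ae
    filter_upwards [hstart, hend] with ω h0 hn
    set n := τ ω with hn'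
    set c : ℕ → ENNReal := fun t => if X t ω = y then (1:ENNReal) else 0 with hc
    have hclast : c 0 = c n := by
      simp only [hc, h0, hn]
    have h1 : (∑ t ∈ Finset.range n, c (t+1)) + c 0 = ∑ t ∈ Finset.range (n+1), c t :=
      (Finset.sum_range_succ' c n).symm
    have h2 : ∑ t ∈ Finset.range (n+1), c t = (∑ t ∈ Finset.range n, c t) + c n :=
      Finset.sum_range_succ c n
    have h3 : (∑ t ∈ Finset.range n, c (t+1)) + c 0 = (∑ t ∈ Finset.range n, c t) + c 0 := by
      rw [h1, h2, hclast]
    have hc0 : c 0 ≠ ⊤ := by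
      simp only [hc]
      split <;> simp
    exact (WithTop.add_right_cancel hc0 h3).symm
  -- one-step formula for shifted events
  have hstep : ∀ (t : ℕ) (y : S),
      μ (Et' t y) = ∑ b : S, μ (Et t b) * ENNReal.ofReal (P b y) := by
    intro t y
    rw [hEt'm t y]
    have hreal : (∑ s : Fin (t+2) → S,
        Set.indicator {s : Fin (t+2) → S |
          ¬ (s ∘ Fin.castSucc) ∈ A t ∧ s (Fin.last (t+1)) = y} (w (t+1)) s)
        = ∑ b : S, (∑ s' : Fin (t+1) → S,
            Set.indicator {s' : Fin (t+1) → S | ¬ s' ∈ A t ∧ s' (Fin.last t) = b} (w t) s')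
            * P b y := by
      simp only [Set.indicator_apply, Set.mem_setOf_eq]
      rw [← Fintype.sum_equiv (Fin.snocEquiv (fun _ => S))
        (fun p : S × (Fin (t+1) → S) =>
          if (¬ p.2 ∈ A t ∧ p.1 = y) then w t p.2 * P (p.2 (Fin.last t)) p.1 else 0)
        _ ?he]
      case he =>
        intro p
        obtain ⟨b, s'⟩ := p
        have hh : (Fin.snocEquiv (fun _ => S)) (b, s') = Fin.snoc s' b := rfl
        have hcomp : (Fin.snoc s' b : Fin (t+2) → S) ∘ Fin.castSucc = s' := by
          funext i
          simp [Fin.snoc_castSucc]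
        simp only [hh, hcomp, Fin.snoc_last, hwsnoc']
      rw [Fintype.sum_prod_type]
      have hb : ∀ b : S, (∑ s' : Fin (t+1) → S,
          if (¬ s' ∈ A t ∧ b = y) then w t s' * P (s' (Fin.last t)) b else 0)
          = if b = y then (∑ s' : Fin (t+1) → S,
              if ¬ s' ∈ A t then w t s' * P (s' (Fin.last t)) y else 0) else 0 := by
        intro b
        by_cases hby : b = y
        · subst hby
          rw [if_pos rfl]
          apply Finset.sum_congr rfl
          intro s' _
          by_cases h : ¬ s' ∈ A t
          · rw [if_pos ⟨h, rfl⟩, if_pos h]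
          · rw [if_neg (fun hc => h hc.1), if_neg h]
        · rw [if_neg hby]
          apply Finset.sum_eq_zero
          intro s' _
          rw [if_neg (fun hc => hby hc.2)]
      simp_rw [hb]
      rw [Finset.sum_ite_eq' Finset.univ y]
      rw [if_pos (Finset.mem_univ y)]
      -- now partition by the value of s' (Fin.last t)
      have hpart : ∀ s' : Fin (t+1) → S,
          (if ¬ s' ∈ A t then w t s' * P (s' (Fin.last t)) y else 0)
          = ∑ b : S, (if (¬ s' ∈ A t ∧ s' (Fin.last t) = b) then w t s' else 0) * P b y := by
        intro s'
        by_cases h : ¬ s' ∈ A t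
        · rw [if_pos h]
          rw [show (∑ b : S, (if (¬ s' ∈ A t ∧ s' (Fin.last t) = b) then w t s' else 0) * P b y)
              = ∑ b : S, (if s' (Fin.last t) = b then w t s' * P b y else 0) from
            Finset.sum_congr rfl (fun b _ => by
              by_cases hj : s' (Fin.last t) = b <;> simp [hj, h])]
          rw [Finset.sum_ite_eq Finset.univ (s' (Fin.last t)) (fun b => w t s' * P b y),
            if_pos (Finset.mem_univ _)]
        · rw [if_neg h]
          symm
          apply Finset.sum_eq_zero
          intro b _
          rw [if_neg (fun hc => h hc.1), zero_mul]
      simp_rw [hpart]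
      rw [Finset.sum_comm]
      apply Finset.sum_congr rfl
      intro b _
      rw [Finset.sum_mul]
    rw [hreal]
    rw [ENNReal.ofReal_sum_of_nonneg (fun b _ => mul_nonneg
      (Finset.sum_nonneg (fun s' _ => Set.indicator_nonneg (fun a _ => hw0 t a) s'))
      (hP0 b y))]
    apply Finset.sum_congr rfl
    intro b _
    rw [ENNReal.ofReal_mul
      (Finset.sum_nonneg (fun s' _ => Set.indicator_nonneg (fun a _ => hw0 t a) s'))]
    rw [hEtm t b]
  -- invariance
  have hinv : ∀ y : S, (∑' t, μ (Et t y))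
      = ∑ b : S, (∑' t, μ (Et t b)) * ENNReal.ofReal (P b y) := by
    intro y
    calc (∑' t, μ (Et t y)) = ∑' t, μ (Et' t y) := by
          rw [← hLHS y, hcycle y, hLHS' y]
      _ = ∑' t, ∑ b : S, μ (Et t b) * ENNReal.ofReal (P b y) :=
          tsum_congr (fun t => hstep t y)
      _ = ∑ b : S, ∑' t, μ (Et t b) * ENNReal.ofReal (P b y) :=
          Summable.tsum_finsetSum (fun b _ => ENNReal.summable)
      _ = ∑ b : S, (∑' t, μ (Et t b)) * ENNReal.ofReal (P b y) :=
          Finset.sum_congr rfl (fun b _ => ENNReal.tsum_mul_right)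
  -- iterated invariance
  have hPn0 := auxPowNonneg P hP0
  have hinvn : ∀ (n : ℕ) (y : S), (∑' t, μ (Et t y))
      = ∑ b : S, (∑' t, μ (Et t b)) * ENNReal.ofReal ((P ^ n) b y) := by
    intro n
    induction n with
    | zero =>
      intro y
      rw [Finset.sum_congr rfl (g := fun b => if b = y then (∑' t, μ (Et t b)) else 0) ?hg]
      case hg =>
        intro b _
        rw [pow_zero, Matrix.one_apply]
        by_cases h : b = y
        · simp [h]
        · simp [h]
      rw [Finset.sum_ite_eq' Finset.univ y, if_pos (Finset.mem_univ y)]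
    | succ n ih =>
      intro y
      rw [hinv y]
      have h1 : ∀ c : S, (∑' t, μ (Et t c)) * ENNReal.ofReal (P c y)
          = ∑ b : S, (∑' t, μ (Et t b))
              * (ENNReal.ofReal ((P ^ n) b c) * ENNReal.ofReal (P c y)) := by
        intro c
        rw [ih c, Finset.sum_mul]
        simp_rw [mul_assoc]
      simp_rw [h1]
      rw [Finset.sum_comm]
      apply Finset.sum_congr rfl
      intro b _
      rw [← Finset.mul_sum]
      congr 1
      have h2 : ∀ c : S, ENNReal.ofReal ((P ^ n) b c) * ENNReal.ofReal (P c y)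
          = ENNReal.ofReal ((P ^ n) b c * P c y) := by
        intro c
        rw [ENNReal.ofReal_mul (hPn0 n b c)]
      simp_rw [h2]
      rw [← ENNReal.ofReal_sum_of_nonneg (fun c _ => mul_nonneg (hPn0 n b c) (hP0 c y))]
      congr 1
  -- total
  have hτint : (∫⁻ ω, (τ ω : ENNReal) ∂μ) = ∑ b : S, ∑' t, μ (Et t b) := by
    have hfeq : (fun ω => (τ ω : ENNReal))
        =ᵐ[μ] (fun ω => ∑ b : S, ∑' t, (B t b).indicator (fun _ => (1:ENNReal)) ω) := by
      filter_upwards [hptwise] with ω h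
      have hτω : (τ ω : ENNReal)
          = ∑ b : S, ∑ t ∈ Finset.range (τ ω), (if X t ω = b then (1:ENNReal) else 0) := by
        rw [Finset.sum_comm]
        have hone : ∀ t : ℕ, ∑ b : S, (if X t ω = b then (1:ENNReal) else 0) = 1 := by
          intro t
          rw [Finset.sum_ite_eq Finset.univ (X t ω) (fun _ => (1:ENNReal))]
          rw [if_pos (Finset.mem_univ _)]
        simp_rw [hone]
        simp
      rw [hτω]
      apply Finset.sum_congr rfl
      intro b _
      exact h b
    rw [lintegral_congr_ae hfeq]
    rw [lintegral_finset_sum (f := fun b ω => ∑' t, (B t b).indicator (fun _ => (1:ENNReal)) ω)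
      _ (fun b _ => Measurable.ennreal_tsum (fun t => measurable_one.indicator (hB1 t b)))]
    apply Finset.sum_congr rfl
    intro b _
    rw [hGint (fun t => B t b) (fun t => hB1 t b)]
    exact tsum_congr (fun t => hB2 t b)
  -- conclusion
  intro y
  rw [hLHS y, hτint]
  by_cases hT : (∑ b : S, ∑' t, μ (Et t b)) = ⊤
  · obtain ⟨b, -, hb⟩ := ENNReal.sum_eq_top.mp hT
    obtain ⟨n, -, hn⟩ := hrec b y
    have hνy : (∑' t, μ (Et t y)) = ⊤ := by
      rw [hinvn n y]
      apply top_le_iff.mp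
      refine le_trans ?_ (Finset.single_le_sum
        (f := fun b => (∑' t, μ (Et t b)) * ENNReal.ofReal ((P ^ n) b y))
        (fun c _ => zero_le) (Finset.mem_univ b))
      show ⊤ ≤ (∑' t, μ (Et t b)) * ENNReal.ofReal ((P ^ n) b y)
      rw [hb, ENNReal.top_mul (ENNReal.ofReal_pos.mpr hn).ne']
    rw [hνy, hT, ENNReal.top_mul (ENNReal.ofReal_pos.mpr (hπpos y)).ne']
  · have hfin : ∀ b : S, (∑' t, μ (Et t b)) ≠ ⊤ := by
      intro b hc
      exact hT (ENNReal.sum_eq_top.mpr ⟨b, Finset.mem_univ b, hc⟩)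
    have hfstat : ∀ z : S, ∑ b, (∑' t, μ (Et t b)).toReal * P b z
        = (∑' t, μ (Et t z)).toReal := by
      intro z
      have h2 : (∑' t, μ (Et t z)).toReal
          = (∑ b : S, (∑' t, μ (Et t b)) * ENNReal.ofReal (P b z)).toReal := by
        rw [← hinv z]
      rw [ENNReal.toReal_sum (fun b _ => ENNReal.mul_ne_top (hfin b) ENNReal.ofReal_ne_top)] at h2
      simp_rw [ENNReal.toReal_mul, ENNReal.toReal_ofReal (hP0 _ z)] at h2
      exact h2.symm
    have huniq := statUnique P hP0 hProw hrec π hπsum hstat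
      (fun b => (∑' t, μ (Et t b)).toReal) hfstat y
    have hsumf : ∑ b : S, (∑' t, μ (Et t b)).toReal = (∑ b : S, ∑' t, μ (Et t b)).toReal := by
      rw [ENNReal.toReal_sum (fun b _ => hfin b)]
    have hfy : (∑' t, μ (Et t y)) = ENNReal.ofReal ((∑' t, μ (Et t y)).toReal) :=
      (ENNReal.ofReal_toReal (hfin y)).symm
    rw [hfy, huniq, hsumf, ENNReal.ofReal_mul ENNReal.toReal_nonneg,
      ENNReal.ofReal_toReal hT]
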